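/- Let n ≥ 3, let u,v ∈ C^n([a,b]) with dim P^n_{u,v}([a,b]) = n and condition (C1) holding, and let the functions U_{i,k,n-1} be defined by the integral recurrence. Then for all k = 2, ..., n-1: the i-th derivative U_{i,k,n-1}^{(i)}(a) ≠ 0 for i = 0, ..., k-1, and the (k-i)-th derivative U_{i,k,n-1}^{(k-i)}(b) ≠ 0 for i = 1, ..., k. In particular, for k = n-1 the Bernstein functions B_{i,n-1} := U_{i,n-1,n-1} satisfy B_{i,n-1}^{(i)}(a) ≠ 0 for i = 0, ..., n-2 and B_{i,n-1}^{(n-i-1)}(b) ≠ 0 for i = 1, ..., n-1. -/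

import Mathlib

open Set

noncomputable section

/-- Iterated derivative within the interval `[a, b]`. -/
def dW (a b : ℝ) (k : ℕ) (f : ℝ → ℝ) : ℝ → ℝ :=
  iteratedDerivWithin k f (Set.Icc a b)

/-- Generating set `{1, s, ..., s^(n-3), u, v}` of the space `P^n_{u,v}`. -/
def genSet (n : ℕ) (u v : ℝ → ℝ) : Set (ℝ → ℝ) :=
  insert u (insert v {f : ℝ → ℝ | ∃ i : ℕ, i + 3 ≤ n ∧ f = fun s : ℝ => s ^ i})

/-- The space `P^n_{u,v}` as a subspace of `ℝ → ℝ`. -/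
def Pspace (n : ℕ) (u v : ℝ → ℝ) : Submodule ℝ (ℝ → ℝ) :=
  Submodule.span ℝ (genSet n u v)

/-- Restriction of functions to `[a, b]`, as a linear map. -/
def restrictMap (a b : ℝ) : (ℝ → ℝ) →ₗ[ℝ] (Set.Icc a b → ℝ) :=
  LinearMap.funLeft ℝ ℝ Subtype.val

/-- The dimension of `P^n_{u,v}([a,b])`, i.e. of the space of restrictions to `[a,b]`. -/
def dimP (n : ℕ) (u v : ℝ → ℝ) (a b : ℝ) : ℕ :=
  Module.finrank ℝ ((Pspace n u v).map (restrictMap a b))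

/-- Condition (C1): if the `(n-2)`-th derivative of an element of `P^n_{u,v}([a,b])`
vanishes at two distinct points of `[a,b]`, it vanishes identically on `[a,b]`. -/
def CondC1 (n : ℕ) (u v : ℝ → ℝ) (a b : ℝ) : Prop :=
  ∀ ψ ∈ Pspace n u v, ∀ s₁ ∈ Set.Icc a b, ∀ s₂ ∈ Set.Icc a b, s₁ ≠ s₂ →
    dW a b (n - 2) ψ s₁ = 0 → dW a b (n - 2) ψ s₂ = 0 →
      ∀ s ∈ Set.Icc a b, dW a b (n - 2) ψ s = 0

/-- Condition (C2): if the `(n-2)`-th and `(n-1)`-th derivatives of an element of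
`P^n_{u,v}([a,b])` vanish at a common interior point, the `(n-2)`-th derivative
vanishes identically on `[a,b]`. -/
def CondC2 (n : ℕ) (u v : ℝ → ℝ) (a b : ℝ) : Prop :=
  ∀ ψ ∈ Pspace n u v, ∀ s₁ ∈ Set.Ioo a b,
    dW a b (n - 2) ψ s₁ = 0 → dW a b (n - 1) ψ s₁ = 0 →
      ∀ s ∈ Set.Icc a b, dW a b (n - 2) ψ s = 0

/-- The number `d_{i,k,n-1} = ∫_a^b U_{i,k,n-1}(t) dt`. -/
def dInt (a b : ℝ) (U : ℕ → ℕ → ℝ → ℝ) (i k : ℕ) : ℝ :=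
  ∫ t in a..b, U i k t

/-- The function `V_{i,k,n-1}(s) = ∫_a^s U_{i,k,n-1}(t)/d_{i,k,n-1} dt`. -/
def Vfun (a b : ℝ) (U : ℕ → ℕ → ℝ → ℝ) (i k : ℕ) (s : ℝ) : ℝ :=
  ∫ t in a..s, U i k t / dInt a b U i k

/-- The integral recurrence defining the functions `U_{i,k,n-1}` (the second index of
`U` is `k`, the third index `n-1` being fixed). -/
structure Recur (n : ℕ) (u v : ℝ → ℝ) (a b : ℝ) (U : ℕ → ℕ → ℝ → ℝ) : Prop where
  base₀_mem : U 0 1 ∈ Submodule.span ℝ {dW a b (n - 2) u, dW a b (n - 2) v}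
  base₁_mem : U 1 1 ∈ Submodule.span ℝ {dW a b (n - 2) u, dW a b (n - 2) v}
  base₀_a : U 0 1 a = 1
  base₀_b : U 0 1 b = 0
  base₁_a : U 1 1 a = 0
  base₁_b : U 1 1 b = 1
  base_pos : ∀ s ∈ Set.Ioo a b, 0 < U 0 1 s ∧ 0 < U 1 1 s
  rec_zero : ∀ k, 2 ≤ k → k ≤ n - 1 → ∀ s, U 0 k s = 1 - Vfun a b U 0 (k - 1) s
  rec_mid : ∀ k, 2 ≤ k → k ≤ n - 1 → ∀ i, 1 ≤ i → i ≤ k - 1 → ∀ s,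
    U i k s = Vfun a b U (i - 1) (k - 1) s - Vfun a b U i (k - 1) s
  rec_top : ∀ k, 2 ≤ k → k ≤ n - 1 → ∀ s, U k k s = Vfun a b U (k - 1) (k - 1) s

/-! ### Auxiliary lemmas -/

section Aux

variable {a b : ℝ}

lemma dW_zero (f : ℝ → ℝ) : dW a b 0 f = f := by
  ext x; simp [dW]

lemma uD (hab : a < b) : UniqueDiffOn ℝ (Icc a b) := uniqueDiffOn_Icc hab

/-- FTC within the interval. -/
lemma ftc (hab : a < b) {g : ℝ → ℝ} (hg : ContinuousOn g (Icc a b)) {x : ℝ} (hx : x ∈ Icc a b) :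
    HasDerivWithinAt (fun s => ∫ t in a..s, g t) (g x) (Icc a b) x := by
  haveI : Fact (x ∈ Icc a b) := ⟨hx⟩
  exact intervalIntegral.integral_hasDerivWithinAt_right
    ((hg.mono (Icc_subset_Icc_right hx.2)).intervalIntegrable_of_Icc hx.1)
    (hg.stronglyMeasurableAtFilter_nhdsWithin measurableSet_Icc x)
    (hg x hx)

/-- shift: (j+1)-st derivative of f equals j-th derivative of a pointwise derivative g. -/
lemma dW_shift (hab : a < b) {f g : ℝ → ℝ}
    (hf : ∀ y ∈ Icc a b, HasDerivWithinAt f (g y) (Icc a b) y)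
    (j : ℕ) {x : ℝ} (hx : x ∈ Icc a b) :
    dW a b (j + 1) f x = dW a b j g x := by
  have h1 : iteratedDerivWithin (j+1) f (Icc a b) x
      = iteratedDerivWithin j (derivWithin f (Icc a b)) (Icc a b) x :=
    congrFun iteratedDerivWithin_succ' x
  have h2 : Set.EqOn (derivWithin f (Icc a b)) g (Icc a b) := fun y hy =>
    (hf y hy).derivWithin ((uD hab).uniqueDiffWithinAt hy)
  exact h1.trans (iteratedDerivWithin_congr h2 hx)

lemma contDiffOn_dW (hab : a < b) (m j : ℕ) {f : ℝ → ℝ}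
    (hf : ContDiffOn ℝ (m + j : ℕ) f (Icc a b)) :
    ContDiffOn ℝ (m : ℕ) (dW a b j f) (Icc a b) := by
  induction j generalizing m with
  | zero => rw [dW_zero]; exact_mod_cast hf
  | succ j IH =>
    have hf' : ContDiffOn ℝ ((m+1) + j : ℕ) f (Icc a b) := by
      convert hf using 2; omega
    have h1 : ContDiffOn ℝ ((m+1 : ℕ)) (dW a b j f) (Icc a b) := IH (m+1) hf'
    have h2 : ContDiffOn ℝ (m : ℕ) (derivWithin (dW a b j f) (Icc a b)) (Icc a b) := by
      apply h1.derivWithin (uD hab)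
      exact_mod_cast le_refl _
    apply h2.congr
    intro x hx
    exact congrFun iteratedDerivWithin_succ x

lemma dW_succ (hab : a < b) {f : ℝ → ℝ} (j : ℕ) {x : ℝ} (hx : x ∈ Icc a b) :
    dW a b (j+1) f x = derivWithin (dW a b j f) (Icc a b) x :=
  congrFun iteratedDerivWithin_succ x

/-- linear combination commutes with dW -/
lemma dW_comb (hab : a < b) (j : ℕ) {F G : ℝ → ℝ} (c₁ c₂ : ℝ)
    (hF : ContDiffOn ℝ (j : ℕ) F (Icc a b)) (hG : ContDiffOn ℝ (j : ℕ) G (Icc a b))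
    {x : ℝ} (hx : x ∈ Icc a b) :
    dW a b j (fun s => c₁ * F s + c₂ * G s) x = c₁ * dW a b j F x + c₂ * dW a b j G x := by
  have h1 : dW a b j (fun s => c₁ * F s + c₂ * G s) x
      = dW a b j ((c₁ • F) + (c₂ • G)) x := by
    congr 1
  rw [h1]
  unfold dW
  have hFs : ContDiffOn ℝ (j : ℕ) (c₁ • F) (Icc a b) := hF.const_smul c₁
  have hGs : ContDiffOn ℝ (j : ℕ) (c₂ • G) (Icc a b) := hG.const_smul c₂
  rw [iteratedDerivWithin_add (f := c₁ • F) (g := c₂ • G) hx (uD hab) (hFs x hx) (hGs x hx),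
    iteratedDerivWithin_const_smul hx (uD hab) c₁ (hF x hx),
    iteratedDerivWithin_const_smul hx (uD hab) c₂ (hG x hx)]
  simp

/-- The iterated derivative within has the next one as a derivative within. -/
lemma hasDW (hab : a < b) {m k : ℕ} (hmk : m + 1 ≤ k) {f : ℝ → ℝ}
    (hf : ContDiffOn ℝ (k : ℕ) f (Icc a b)) {x : ℝ} (hx : x ∈ Icc a b) :
    HasDerivWithinAt (dW a b m f) (dW a b (m+1) f x) (Icc a b) x := by
  have h1 : ContDiffOn ℝ (1 : ℕ) (dW a b m f) (Icc a b) := by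
    apply contDiffOn_dW hab 1 m
    apply hf.of_le
    exact_mod_cast (by omega : 1 + m ≤ k)
  have h2 : DifferentiableWithinAt ℝ (dW a b m f) (Icc a b) x := by
    have := h1.differentiableOn (by norm_num)
    exact this x hx
  have := h2.hasDerivWithinAt
  rwa [← dW_succ hab m hx] at this

/-- positivity near the left endpoint from the first nonvanishing derivative -/
lemma left_pos (hab : a < b) {f : ℝ → ℝ} (m : ℕ)
    (hf : ContDiffOn ℝ (m : ℕ) f (Icc a b))
    (hz : ∀ j < m, dW a b j f a = 0) (hp : 0 < dW a b m f a) :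
    ∃ c, a < c ∧ c ≤ b ∧ ∀ x, a < x → x ≤ c → 0 < f x := by
  induction m generalizing f with
  | zero =>
    have hc : ContinuousWithinAt f (Icc a b) a := by
      have : ContinuousOn f (Icc a b) := by
        simpa using (contDiffOn_zero.mp (by exact_mod_cast hf))
      exact this a (left_mem_Icc.mpr hab.le)
    have hp0 : 0 < f a := by simpa [dW] using hp
    have hev : ∀ᶠ x in nhdsWithin a (Icc a b), 0 < f x :=
      hc.eventually (eventually_gt_nhds hp0)
    have hev' : {x | 0 < f x} ∈ nhdsWithin a (Icc a b) := hev
    rw [Metric.mem_nhdsWithin_iff] at hev'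
    obtain ⟨ε, hε, hball⟩ := hev'
    refine ⟨min (a + ε/2) b, by simp [hab]; linarith, min_le_right _ _, ?_⟩
    intro x hax hxc
    apply hball
    constructor
    · rw [Metric.mem_ball, Real.dist_eq, abs_lt]
      have : x ≤ a + ε/2 := le_trans hxc (min_le_left _ _)
      constructor <;> linarith
    · exact ⟨hax.le, le_trans hxc (min_le_right _ _)⟩
  | succ m IH =>
    set g := derivWithin f (Icc a b) with hg
    have hfg : ∀ j, ∀ x ∈ Icc a b, dW a b (j+1) f x = dW a b j g x := by
      intro j x hx
      unfold dW
      rw [iteratedDerivWithin_succ']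
    have hgC : ContDiffOn ℝ (m : ℕ) g (Icc a b) := by
      apply hf.derivWithin (uD hab)
      exact_mod_cast le_refl _
    have haI : a ∈ Icc a b := left_mem_Icc.mpr hab.le
    obtain ⟨c, hac, hcb, hgpos⟩ := IH hgC
      (fun j hj => by rw [← hfg j a haI]; exact hz (j+1) (by omega))
      (by rw [← hfg m a haI]; exact hp)
    have hf0 : f a = 0 := by have := hz 0 (by omega); simpa [dW] using this
    have hmono : StrictMonoOn f (Icc a c) := by
      apply strictMonoOn_of_deriv_pos (convex_Icc a c)
      · exact (hf.continuousOn).mono (Icc_subset_Icc_right hcb)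
      · intro x hx
        rw [interior_Icc] at hx
        have hxI : x ∈ Icc a b := ⟨hx.1.le, le_trans hx.2.le hcb⟩
        have hdiff : DifferentiableWithinAt ℝ f (Icc a b) x := by
          have h1 : ContDiffOn ℝ (1:ℕ) f (Icc a b) :=
            hf.of_le (by exact_mod_cast (by omega : 1 ≤ m + 1))
          exact h1.differentiableOn (by norm_num) x hxI
        have hnb : Icc a b ∈ nhds x :=
          Icc_mem_nhds hx.1 (lt_of_lt_of_le hx.2 hcb)
        have : HasDerivAt f (g x) x := hdiff.hasDerivWithinAt.hasDerivAt hnb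
        rw [this.deriv]
        exact hgpos x hx.1 hx.2.le
    refine ⟨c, hac, hcb, fun x hax hxc => ?_⟩
    have := hmono (left_mem_Icc.mpr hac.le) ⟨hax.le, hxc⟩ hax
    rwa [hf0] at this

/-- sign behavior near the right endpoint from the first nonvanishing derivative -/
lemma right_pos (hab : a < b) {f : ℝ → ℝ} (m : ℕ) (ε : ℝ) (hε : ε = 1 ∨ ε = -1)
    (hf : ContDiffOn ℝ (m : ℕ) f (Icc a b))
    (hz : ∀ j < m, dW a b j f b = 0) (hp : 0 < ε * ((-1:ℝ)^m * dW a b m f b)) :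
    ∃ c, a ≤ c ∧ c < b ∧ ∀ x, c ≤ x → x < b → 0 < ε * f x := by
  induction m generalizing f ε with
  | zero =>
    have hc : ContinuousWithinAt (fun x => ε * f x) (Icc a b) b := by
      have : ContinuousOn f (Icc a b) := by
        simpa using (contDiffOn_zero.mp (by exact_mod_cast hf))
      exact (this.const_smul ε) b (right_mem_Icc.mpr hab.le)
    have hp0 : 0 < ε * f b := by simpa [dW] using hp
    have hev' : {x | 0 < ε * f x} ∈ nhdsWithin b (Icc a b) :=
      hc.eventually (eventually_gt_nhds hp0)
    rw [Metric.mem_nhdsWithin_iff] at hev'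
    obtain ⟨δ, hδ, hball⟩ := hev'
    refine ⟨max (b - δ/2) a, le_max_right _ _, by simp [hab]; linarith, ?_⟩
    intro x hcx hxb
    apply hball
    constructor
    · rw [Metric.mem_ball, Real.dist_eq, abs_lt]
      have : b - δ/2 ≤ x := le_trans (le_max_left _ _) hcx
      constructor <;> linarith
    · exact ⟨le_trans (le_max_right _ _) hcx, hxb.le⟩
  | succ m IH =>
    set g := derivWithin f (Icc a b) with hgdef
    have hbI : b ∈ Icc a b := right_mem_Icc.mpr hab.le
    have hfg : ∀ j, ∀ x ∈ Icc a b, dW a b (j+1) f x = dW a b j g x := by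
      intro j x hx
      unfold dW
      rw [iteratedDerivWithin_succ']
    have hgC : ContDiffOn ℝ (m : ℕ) g (Icc a b) := by
      apply hf.derivWithin (uD hab)
      exact_mod_cast le_refl _
    have hε' : -ε = 1 ∨ -ε = -1 := by rcases hε with h | h <;> simp [h]
    obtain ⟨c, hac, hcb, hgsign⟩ := IH (-ε) hε' hgC
      (fun j hj => by rw [← hfg j b hbI]; exact hz (j+1) (by omega))
      (by
        rw [← hfg m b hbI]
        have : (-ε) * ((-1:ℝ)^m * dW a b (m+1) f b)
            = ε * ((-1:ℝ)^(m+1) * dW a b (m+1) f b) := by ring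
        rw [this]; exact hp)
    have hf0 : f b = 0 := by have := hz 0 (by omega); simpa [dW] using this
    have hderiv : ∀ x ∈ Ioo c b, HasDerivAt f (g x) x := by
      intro x hx
      have hxI : x ∈ Icc a b := ⟨le_trans hac hx.1.le, hx.2.le⟩
      have hdiff : DifferentiableWithinAt ℝ f (Icc a b) x := by
        have h1 : ContDiffOn ℝ (1:ℕ) f (Icc a b) :=
          hf.of_le (by exact_mod_cast (by omega : 1 ≤ m + 1))
        exact h1.differentiableOn (by norm_num) x hxI
      have hnb : Icc a b ∈ nhds x := Icc_mem_nhds (lt_of_le_of_lt hac hx.1) hx.2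
      exact hdiff.hasDerivWithinAt.hasDerivAt hnb
    have hfcont : ContinuousOn f (Icc c b) :=
      hf.continuousOn.mono (Icc_subset_Icc_left hac)
    refine ⟨c, hac, hcb, fun x hcx hxb => ?_⟩
    rcases hε with h1 | h1
    · have hanti : StrictAntiOn f (Icc c b) := by
        apply strictAntiOn_of_deriv_neg (convex_Icc c b) hfcont
        intro y hy
        rw [interior_Icc] at hy
        rw [(hderiv y hy).deriv]
        have := hgsign y hy.1.le hy.2
        rw [h1] at this; simpa using this
      have := hanti ⟨hcx, hxb.le⟩ (right_mem_Icc.mpr hcb.le) hxb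
      rw [hf0] at this; rw [h1]; simpa using this
    · have hmono : StrictMonoOn f (Icc c b) := by
        apply strictMonoOn_of_deriv_pos (convex_Icc c b) hfcont
        intro y hy
        rw [interior_Icc] at hy
        rw [(hderiv y hy).deriv]
        have := hgsign y hy.1.le hy.2
        rw [h1] at this; simpa using this
      have := hmono ⟨hcx, hxb.le⟩ (right_mem_Icc.mpr hcb.le) hxb
      rw [hf0] at this; rw [h1]; simpa using this

/-- Rolle for a strictly monotone tuple of zeros. -/
lemma rolle_chain (hab : a < b) {f g : ℝ → ℝ} (hfc : ContinuousOn f (Icc a b))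
    (hf' : ∀ x ∈ Ioo a b, HasDerivAt f (g x) x)
    {ℓ : ℕ} (p : Fin (ℓ+2) → ℝ) (hp : StrictMono p) (hmem : ∀ j, p j ∈ Icc a b)
    (hz : ∀ j, f (p j) = 0) :
    ∃ q : Fin (ℓ+1) → ℝ, StrictMono q ∧ (∀ j, q j ∈ Ioo a b) ∧ (∀ j, g (q j) = 0) := by
  have key : ∀ j : Fin (ℓ+1), ∃ y ∈ Ioo (p j.castSucc) (p j.succ), g y = 0 := by
    intro j
    have hlt : p j.castSucc < p j.succ := hp (Fin.castSucc_lt_succ (i := j))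
    have hIccsub : Icc (p j.castSucc) (p j.succ) ⊆ Icc a b :=
      Icc_subset_Icc (hmem j.castSucc).1 (hmem j.succ).2
    have hIoosub : Ioo (p j.castSucc) (p j.succ) ⊆ Ioo a b := fun y hy =>
      ⟨lt_of_le_of_lt (hmem j.castSucc).1 hy.1, lt_of_lt_of_le hy.2 (hmem j.succ).2⟩
    obtain ⟨y, hy, hgy⟩ := exists_hasDerivAt_eq_zero hlt (hfc.mono hIccsub)
      ((hz j.castSucc).trans (hz j.succ).symm) (fun x hx => hf' x (hIoosub hx))
    exact ⟨y, hy, hgy⟩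
  choose q hq hgq using key
  refine ⟨q, ?_, ?_, hgq⟩
  · intro j j' hjj'
    have h1 : q j < p j.succ := (hq j).2
    have h2 : p j'.castSucc < q j' := (hq j').1
    have h3 : p j.succ ≤ p j'.castSucc := by
      apply hp.monotone
      rw [Fin.le_def]
      simp only [Fin.val_succ, Fin.coe_castSucc]
      exact hjj'
    exact lt_of_lt_of_le h1 (le_trans h3 h2.le)
  · intro j
    exact ⟨lt_of_le_of_lt (hmem j.castSucc).1 (hq j).1,
      lt_of_lt_of_le (hq j).2 (hmem j.succ).2⟩

/-- Rolle, Finset version. -/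
lemma rolle_finset (hab : a < b) {f g : ℝ → ℝ} (hfc : ContinuousOn f (Icc a b))
    (hf' : ∀ x ∈ Ioo a b, HasDerivAt f (g x) x)
    {T : Finset ℝ} {ℓ : ℕ} (hcard : T.card = ℓ + 2) (hTsub : ↑T ⊆ Icc a b)
    (hTz : ∀ x ∈ T, f x = 0) :
    ∃ S : Finset ℝ, S.card = ℓ + 1 ∧ ↑S ⊆ Ioo a b ∧ ∀ x ∈ S, g x = 0 := by
  set e := T.orderEmbOfFin hcard with he
  have hp : StrictMono (fun j => (e j : ℝ)) := e.strictMono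
  have hmem : ∀ j, (e j : ℝ) ∈ Icc a b := fun j => hTsub (T.orderEmbOfFin_mem hcard j)
  have hz : ∀ j, f (e j) = 0 := fun j => hTz _ (T.orderEmbOfFin_mem hcard j)
  obtain ⟨q, hq, hqmem, hqz⟩ := rolle_chain hab hfc hf' (fun j => (e j : ℝ)) hp hmem hz
  refine ⟨Finset.image q Finset.univ, ?_, ?_, ?_⟩
  · rw [Finset.card_image_of_injective _ hq.injective, Finset.card_univ, Fintype.card_fin]
  · intro x hx
    simp only [Finset.coe_image, Finset.coe_univ, Set.image_univ, Set.mem_range] at hx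
    obtain ⟨j, rfl⟩ := hx
    exact hqmem j
  · intro x hx
    simp only [Finset.mem_image, Finset.mem_univ, true_and] at hx
    obtain ⟨j, rfl⟩ := hx
    exact hqz j

/-- A function with vanishing derivative (within) and a zero is identically zero. -/
lemma zero_of_deriv_zero (hab : a < b) {f g : ℝ → ℝ}
    (hf : ∀ x ∈ Icc a b, HasDerivWithinAt f (g x) (Icc a b) x)
    (hg0 : ∀ x ∈ Icc a b, g x = 0) {z : ℝ} (hz : z ∈ Icc a b) (hfz : f z = 0) :
    ∀ x ∈ Icc a b, f x = 0 := by
  intro x hx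
  have := Convex.norm_image_sub_le_of_norm_hasDerivWithin_le (C := 0) hf
    (fun y hy => by rw [hg0 y hy]; simp) (convex_Icc a b) hz hx
  rw [hfz] at this
  simpa using this

end Aux

/-! ### The level invariant -/

/-- The inductive invariant for level `k`. -/
structure Lv (a b : ℝ) (U : ℕ → ℕ → ℝ → ℝ) (k : ℕ) : Prop where
  smooth : ∀ i ≤ k, ContDiffOn ℝ ((k+1 : ℕ)) (U i k) (Set.Icc a b)
  pos : ∀ i ≤ k, ∀ s ∈ Ioo a b, 0 < U i k s
  va : ∀ i ≤ k, ∀ j < i, dW a b j (U i k) a = 0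
  vb : ∀ i ≤ k, ∀ j, i + j < k → dW a b j (U i k) b = 0
  na : ∀ i < k, 0 < dW a b i (U i k) a
  nb : ∀ i, 1 ≤ i → i ≤ k → 0 < (-1:ℝ)^(k-i) * dW a b (k-i) (U i k) b
  spanU : ∀ i ≤ k, ∃ c₀ c₁ : ℝ, ∀ x ∈ Icc a b,
    dW a b (k-1) (U i k) x = c₀ * U 0 1 x + c₁ * U 1 1 x

section Main

variable {n : ℕ} {a b : ℝ} {u v : ℝ → ℝ} {U : ℕ → ℕ → ℝ → ℝ}

lemma lv_dpos (hab : a < b) {k : ℕ} (L : Lv a b U k) :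
    ∀ i ≤ k, 0 < dInt a b U i k := by
  intro i hi
  apply intervalIntegral.intervalIntegral_pos_of_pos_on
  · exact ((L.smooth i hi).continuousOn).intervalIntegrable_of_Icc hab.le
  · exact fun x hx => L.pos i hi x hx
  · exact hab

lemma lv_base (hn : 3 ≤ n) (hab : a < b)
    (hu : ContDiffOn ℝ n u (Set.Icc a b)) (hv : ContDiffOn ℝ n v (Set.Icc a b))
    (hU : Recur n u v a b U) : Lv a b U 1 := by
  have hbase_smooth : ∀ f ∈ Submodule.span ℝ {dW a b (n - 2) u, dW a b (n - 2) v},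
      ContDiffOn ℝ (2:ℕ) f (Icc a b) := by
    intro f hf
    rw [Submodule.mem_span_pair] at hf
    obtain ⟨c, d, hcd⟩ := hf
    have hu2 : ContDiffOn ℝ (2:ℕ) (dW a b (n-2) u) (Icc a b) := by
      apply contDiffOn_dW hab 2 (n-2)
      have : (2 + (n-2) : ℕ) = n := by omega
      rw [this]; exact hu
    have hv2 : ContDiffOn ℝ (2:ℕ) (dW a b (n-2) v) (Icc a b) := by
      apply contDiffOn_dW hab 2 (n-2)
      have : (2 + (n-2) : ℕ) = n := by omega
      rw [this]; exact hv
    rw [← hcd]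
    exact (hu2.const_smul c).add (hv2.const_smul d)
  have hsm : ∀ i ≤ 1, ContDiffOn ℝ ((1+1 : ℕ)) (U i 1) (Set.Icc a b) := by
    intro i hi
    interval_cases i
    · exact hbase_smooth _ hU.base₀_mem
    · exact hbase_smooth _ hU.base₁_mem
  refine ⟨hsm, ?_, ?_, ?_, ?_, ?_, ?_⟩
  · intro i hi s hs
    interval_cases i
    · exact (hU.base_pos s hs).1
    · exact (hU.base_pos s hs).2
  · intro i hi j hj
    interval_cases i
    · omega
    · have : j = 0 := by omega
      subst this
      rw [dW_zero]; exact hU.base₁_a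
  · intro i hi j hj
    interval_cases i
    · have : j = 0 := by omega
      subst this
      rw [dW_zero]; exact hU.base₀_b
    · omega
  · intro i hi
    have : i = 0 := by omega
    subst this
    rw [dW_zero, hU.base₀_a]; norm_num
  · intro i h1 h2
    have : i = 1 := by omega
    subst this
    simp only [Nat.sub_self, pow_zero, one_mul]
    rw [dW_zero, hU.base₁_b]; norm_num
  · intro i hi
    interval_cases i
    · exact ⟨1, 0, fun x hx => by simp [dW_zero]⟩
    · exact ⟨0, 1, fun x hx => by simp [dW_zero]⟩

/-- The key positivity argument based on condition (C1) and repeated Rolle. -/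
lemma interior_pos {n : ℕ} {a b : ℝ} {u v : ℝ → ℝ} {U : ℕ → ℕ → ℝ → ℝ}
    (hn : 3 ≤ n) (hab : a < b)
    (hu : ContDiffOn ℝ n u (Set.Icc a b)) (hv : ContDiffOn ℝ n v (Set.Icc a b))
    (hC1 : CondC1 n u v a b)
    (hb0 : U 0 1 ∈ Submodule.span ℝ {dW a b (n - 2) u, dW a b (n - 2) v})
    (hb1 : U 1 1 ∈ Submodule.span ℝ {dW a b (n - 2) u, dW a b (n - 2) v})
    {h : ℝ → ℝ} {K i : ℕ} (hi1 : 1 ≤ i) (hiK : i + 1 ≤ K)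
    (hsm : ContDiffOn ℝ ((K+1 : ℕ)) h (Icc a b))
    (hva : ∀ j < i, dW a b j h a = 0)
    (hna : 0 < dW a b i h a)
    (hvb : ∀ j, i + j < K → dW a b j h b = 0)
    (hnb : 0 < (-1:ℝ)^(K-i) * dW a b (K-i) h b)
    (hspan : ∃ c₀ c₁ : ℝ, ∀ x ∈ Icc a b,
      dW a b (K-1) h x = c₀ * U 0 1 x + c₁ * U 1 1 x) :
    ∀ s ∈ Ioo a b, 0 < h s := by
  have haI : a ∈ Icc a b := left_mem_Icc.mpr hab.le
  have hbI : b ∈ Icc a b := right_mem_Icc.mpr hab.le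
  have hKi : i + (K - i) = K := by omega
  by_contra hcon
  push_neg at hcon
  obtain ⟨s0, hs0I, hs0⟩ := hcon
  -- basic facts about derivatives of h
  have hDcont : ∀ j ≤ K, ContinuousOn (dW a b j h) (Icc a b) := by
    intro j hj
    have := contDiffOn_dW hab 1 j (f := h) (by
      have : ((1 + j : ℕ)) ≤ ((K+1 : ℕ)) := by omega
      exact hsm.of_le (by exact_mod_cast this))
    exact this.continuousOn
  have hDderiv : ∀ j, j + 1 ≤ K + 1 → ∀ x ∈ Icc a b,
      HasDerivWithinAt (dW a b j h) (dW a b (j+1) h x) (Icc a b) x := by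
    intro j hj x hx
    exact hasDW hab hj hsm hx
  have hDderivAt : ∀ j ≤ K, ∀ x ∈ Ioo a b, HasDerivAt (dW a b j h) (dW a b (j+1) h x) x := by
    intro j hj x hx
    exact (hDderiv j (by omega) x ⟨hx.1.le, hx.2.le⟩).hasDerivAt (Icc_mem_nhds hx.1 hx.2)
  have hha : h a = 0 := by
    have := hva 0 (by omega); rwa [dW_zero] at this
  have hhb : h b = 0 := by
    have := hvb 0 (by omega); rwa [dW_zero] at this
  -- h is positive near a and near b
  obtain ⟨cL, hacL, hcLb, hposL⟩ := left_pos hab i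
    (hsm.of_le (by exact_mod_cast (by omega : (i:ℕ) ≤ K + 1))) hva hna
  obtain ⟨cR, hacR, hcRb, hposR⟩ := right_pos hab (K-i) 1 (Or.inl rfl)
    (hsm.of_le (by exact_mod_cast (by omega : (K-i:ℕ) ≤ K + 1)))
    (fun j hj => hvb j (by omega)) (by simpa using hnb)
  simp only [one_mul] at hposR
  -- an interior zero z of h
  obtain ⟨z, hzI, hz0⟩ : ∃ z ∈ Ioo a b, h z = 0 := by
    rcases eq_or_lt_of_le hs0 with heq | hlt
    · exact ⟨s0, hs0I, heq⟩
    · have hcLs0 : cL < s0 := by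
        by_contra hle
        push_neg at hle
        exact absurd (hposL s0 hs0I.1 hle) (not_lt.mpr hlt.le)
      have hsub : Icc cL s0 ⊆ Icc a b := Icc_subset_Icc hacL.le hs0I.2.le
      have hm : h s0 ≤ (0:ℝ) := hlt.le
      have hIVT := intermediate_value_Icc' hcLs0.le ((hDcont 0 (by omega)).mono hsub)
      rw [dW_zero] at hIVT
      have h0mem : (0:ℝ) ∈ Icc (h s0) (h cL) := ⟨hlt.le, (hposL cL hacL le_rfl).le⟩
      obtain ⟨z, hzmem, hz0⟩ := hIVT h0mem
      refine ⟨z, ⟨lt_of_lt_of_le hacL hzmem.1, lt_of_le_of_lt hzmem.2 hs0I.2⟩, hz0⟩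
  -- the counting invariant
  have count : ∀ m, m ≤ K - 1 → ∃ T : Finset ℝ,
      T.card + m = 1 + min i (m+1) + min (K-i) (m+1) ∧ ↑T ⊆ Icc a b ∧
      (∀ x ∈ T, dW a b m h x = 0) ∧ (m < i → a ∈ T) ∧ (m < K - i → b ∈ T) := by
    intro m
    induction m with
    | zero =>
      intro _
      refine ⟨{a, z, b}, ?_, ?_, ?_, fun _ => by simp, fun _ => by simp⟩
      · have hne1 : a ≠ z := ne_of_lt hzI.1
        have hne2 : a ≠ b := ne_of_lt hab
        have hne3 : z ≠ b := ne_of_lt hzI.2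
        rw [Finset.card_insert_of_notMem (by simp [hne1, hne2]),
          Finset.card_insert_of_notMem (by simp [hne3]), Finset.card_singleton]
        omega
      · intro x hx
        simp only [Finset.coe_insert, Set.mem_insert_iff, Finset.coe_singleton,
          Set.mem_singleton_iff] at hx
        rcases hx with rfl | rfl | rfl
        · exact haI
        · exact ⟨hzI.1.le, hzI.2.le⟩
        · exact hbI
      · intro x hx
        rw [dW_zero]
        simp only [Finset.mem_insert, Finset.mem_singleton] at hx
        rcases hx with rfl | rfl | rfl
        · exact hha
        · exact hz0
        · exact hhb
    | succ m IHm =>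
      intro hm
      obtain ⟨T, hcard, hTsub, hTz, hTa, hTb⟩ := IHm (by omega)
      have hT2 : 2 ≤ T.card := by omega
      obtain ⟨ℓ, hℓ⟩ : ∃ ℓ, T.card = ℓ + 2 := ⟨T.card - 2, by omega⟩
      obtain ⟨S, hScard, hSsub, hSz⟩ := rolle_finset hab (hDcont m (by omega))
        (hDderivAt m (by omega)) hℓ hTsub hTz
      have haS : a ∉ S := fun hmem => absurd (hSsub hmem).1 (lt_irrefl a)
      have hbS : b ∉ S := fun hmem => absurd (hSsub hmem).2 (lt_irrefl b)
      have hSsub' : ↑S ⊆ Icc a b := fun x hx => Ioo_subset_Icc_self (hSsub hx)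
      by_cases hia : m + 1 < i <;> by_cases hib : m + 1 < K - i
      · refine ⟨insert a (insert b S), ?_, ?_, ?_, fun _ => by simp, fun _ => by simp⟩
        · rw [Finset.card_insert_of_notMem (by simp [haS, ne_of_lt hab]),
            Finset.card_insert_of_notMem hbS]
          omega
        · intro x hx
          simp only [Finset.coe_insert, Set.mem_insert_iff] at hx
          rcases hx with rfl | rfl | hx
          · exact haI
          · exact hbI
          · exact hSsub' hx
        · intro x hx
          simp only [Finset.mem_insert] at hx
          rcases hx with rfl | rfl | hx
          · exact hva (m+1) hia
          · exact hvb (m+1) (by omega)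
          · exact hSz x hx
      · refine ⟨insert a S, ?_, ?_, ?_, fun _ => by simp, fun hc => absurd hc hib⟩
        · rw [Finset.card_insert_of_notMem haS]
          omega
        · intro x hx
          simp only [Finset.coe_insert, Set.mem_insert_iff] at hx
          rcases hx with rfl | hx
          · exact haI
          · exact hSsub' hx
        · intro x hx
          simp only [Finset.mem_insert] at hx
          rcases hx with rfl | hx
          · exact hva (m+1) hia
          · exact hSz x hx
      · refine ⟨insert b S, ?_, ?_, ?_, fun hc => absurd hc hia, fun _ => by simp⟩
        · rw [Finset.card_insert_of_notMem hbS]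
          omega
        · intro x hx
          simp only [Finset.coe_insert, Set.mem_insert_iff] at hx
          rcases hx with rfl | hx
          · exact hbI
          · exact hSsub' hx
        · intro x hx
          simp only [Finset.mem_insert] at hx
          rcases hx with rfl | hx
          · exact hvb (m+1) (by omega)
          · exact hSz x hx
      · exact ⟨S, by omega, hSsub', hSz, fun hc => absurd hc hia, fun hc => absurd hc hib⟩
  -- two distinct zeros of the (K-1)-st derivative
  obtain ⟨T, hcard, hTsub, hTz, -, -⟩ := count (K-1) le_rfl
  have hTcard2 : T.card = 2 := by omega
  obtain ⟨z₁, hz₁, z₂, hz₂, hz12⟩ := Finset.one_lt_card.mp (show 1 < T.card by omega)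
  -- use condition C1 to conclude the (K-1)-st derivative vanishes identically
  obtain ⟨c₀, c₁, hsp⟩ := hspan
  obtain ⟨α₀, β₀, hab0⟩ := Submodule.mem_span_pair.mp hb0
  obtain ⟨α₁, β₁, hab1⟩ := Submodule.mem_span_pair.mp hb1
  set γ₁ := c₀ * α₀ + c₁ * α₁ with hγ₁
  set γ₂ := c₀ * β₀ + c₁ * β₁ with hγ₂
  set ψ : ℝ → ℝ := fun s => γ₁ * u s + γ₂ * v s with hψ
  have hψP : ψ ∈ Pspace n u v := by
    have hu' : u ∈ Pspace n u v := Submodule.subset_span (by simp [genSet])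
    have hv' : v ∈ Pspace n u v := Submodule.subset_span (by simp [genSet])
    have : ψ = γ₁ • u + γ₂ • v := by funext s; simp [hψ, mul_comm]
    rw [this]
    exact Submodule.add_mem _ (Submodule.smul_mem _ _ hu') (Submodule.smul_mem _ _ hv')
  have hun2 : ContDiffOn ℝ ((n-2 : ℕ)) u (Icc a b) :=
    hu.of_le (by exact_mod_cast (by omega : (n - 2 : ℕ) ≤ n))
  have hvn2 : ContDiffOn ℝ ((n-2 : ℕ)) v (Icc a b) :=
    hv.of_le (by exact_mod_cast (by omega : (n - 2 : ℕ) ≤ n))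
  have hψd : ∀ x ∈ Icc a b, dW a b (n-2) ψ x = dW a b (K-1) h x := by
    intro x hx
    have hcombo := dW_comb hab (n-2) γ₁ γ₂ hun2 hvn2 hx
    have e0 : U 0 1 x = α₀ * dW a b (n-2) u x + β₀ * dW a b (n-2) v x := by
      have := congrFun hab0 x
      simpa [mul_comm] using this.symm
    have e1 : U 1 1 x = α₁ * dW a b (n-2) u x + β₁ * dW a b (n-2) v x := by
      have := congrFun hab1 x
      simpa [mul_comm] using this.symm
    show dW a b (n-2) (fun s => γ₁ * u s + γ₂ * v s) x = _
    rw [hcombo, hsp x hx, e0, e1, hγ₁, hγ₂]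
    ring
  have hφz₁ : dW a b (n-2) ψ z₁ = 0 := by
    rw [hψd z₁ (hTsub hz₁)]
    exact hTz z₁ hz₁
  have hφz₂ : dW a b (n-2) ψ z₂ = 0 := by
    rw [hψd z₂ (hTsub hz₂)]
    exact hTz z₂ hz₂
  have hφ0 : ∀ x ∈ Icc a b, dW a b (K-1) h x = 0 := by
    intro x hx
    rw [← hψd x hx]
    exact hC1 ψ hψP z₁ (hTsub hz₁) z₂ (hTsub hz₂) hz12 hφz₁ hφz₂ x hx
  -- propagate the vanishing downwards
  have down : ∀ m, m ≤ K - 1 → ∀ x ∈ Icc a b, dW a b (K-1-m) h x = 0 := by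
    intro m
    induction m with
    | zero => intro _; simpa using hφ0
    | succ m IHm =>
      intro hm x hx
      have hprev : ∀ y ∈ Icc a b, dW a b (K-1-m) h y = 0 := IHm (by omega)
      have hidx : K - 1 - (m+1) + 1 = K - 1 - m := by omega
      -- a zero of the (K-1-(m+1))-st derivative
      obtain ⟨T', hcard', hTsub', hTz', -, -⟩ := count (K-1-(m+1)) (by omega)
      have hT'pos : 0 < T'.card := by omega
      obtain ⟨w, hw⟩ := Finset.card_pos.mp hT'pos
      apply zero_of_deriv_zero hab (g := dW a b (K-1-m) h) ?_ hprev (hTsub' hw) (hTz' w hw) x hx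
      intro y hy
      have := hDderiv (K-1-(m+1)) (by omega) y hy
      rwa [hidx] at this
  have : dW a b i h a = 0 := by
    have hi' : K - 1 - (K - 1 - i) = i := by omega
    have := down (K-1-i) (by omega) a haI
    rwa [hi'] at this
  exact absurd this (ne_of_gt hna)

lemma lv_step {n : ℕ} {a b : ℝ} {u v : ℝ → ℝ} {U : ℕ → ℕ → ℝ → ℝ}
    (hn : 3 ≤ n) (hab : a < b)
    (hu : ContDiffOn ℝ n u (Set.Icc a b)) (hv : ContDiffOn ℝ n v (Set.Icc a b))
    (hC1 : CondC1 n u v a b) (hU : Recur n u v a b U)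
    {k : ℕ} (hk1 : 1 ≤ k) (hkn : k + 1 ≤ n - 1) (IH : Lv a b U k) : Lv a b U (k+1) := by
  have haI : a ∈ Icc a b := left_mem_Icc.mpr hab.le
  have hbI : b ∈ Icc a b := right_mem_Icc.mpr hab.le
  have hd : ∀ i ≤ k, 0 < dInt a b U i k := lv_dpos hab IH
  have hcont : ∀ i ≤ k, ContinuousOn (U i k) (Icc a b) :=
    fun i hi => (IH.smooth i hi).continuousOn
  have hgden : ∀ i ≤ k, ContinuousOn (fun t => U i k t / dInt a b U i k) (Icc a b) :=
    fun i hi => (hcont i hi).div_const _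
  have hVd : ∀ i, i ≤ k → ∀ x ∈ Icc a b,
      HasDerivWithinAt (Vfun a b U i k) (U i k x / dInt a b U i k) (Icc a b) x := by
    intro i hi x hx
    exact ftc hab (hgden i hi) hx
  have hVa : ∀ i : ℕ, Vfun a b U i k a = 0 := fun i => intervalIntegral.integral_same
  have hVb : ∀ i ≤ k, Vfun a b U i k b = 1 := by
    intro i hi
    unfold Vfun
    rw [intervalIntegral.integral_div]
    exact div_self (ne_of_gt (hd i hi))
  have hk2 : 2 ≤ k + 1 := by omega
  have e0 : U 0 (k+1) = fun s => 1 - Vfun a b U 0 k s := by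
    funext s
    have := hU.rec_zero (k+1) hk2 hkn s
    simpa using this
  have emid : ∀ i, 1 ≤ i → i ≤ k →
      U i (k+1) = fun s => Vfun a b U (i-1) k s - Vfun a b U i k s := by
    intro i h1 h2
    funext s
    have := hU.rec_mid (k+1) hk2 hkn i h1 (by omega) s
    simpa using this
  have etop : U (k+1) (k+1) = fun s => Vfun a b U k k s := by
    funext s
    have := hU.rec_top (k+1) hk2 hkn s
    simpa using this
  -- values at a and b
  have hUa0 : U 0 (k+1) a = 1 := by rw [e0]; simp [hVa]
  have hUamid : ∀ i, 1 ≤ i → i ≤ k + 1 → U i (k+1) a = 0 := by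
    intro i h1 h2
    rcases eq_or_lt_of_le h2 with rfl | hlt
    · rw [etop]; simp [hVa]
    · rw [emid i h1 (by omega)]; simp [hVa]
  have hUb0 : ∀ i ≤ k, U i (k+1) b = 0 := by
    intro i hi
    rcases Nat.eq_zero_or_pos i with rfl | hpos
    · rw [e0]; simp [hVb 0 (by omega)]
    · rw [emid i hpos hi]; simp [hVb (i-1) (by omega), hVb i hi]
  have hUbtop : U (k+1) (k+1) b = 1 := by rw [etop]; simp [hVb k le_rfl]
  -- HasDerivWithinAt for the three shapes
  have hder0 : ∀ x ∈ Icc a b, HasDerivWithinAt (U 0 (k+1))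
      (0 * U 0 k x + (-(1 / dInt a b U 0 k)) * U 0 k x) (Icc a b) x := by
    intro x hx
    rw [e0]
    have := (hasDerivWithinAt_const x (Icc a b) (1:ℝ)).fun_sub (hVd 0 (by omega) x hx)
    exact this.congr_deriv (by ring)
  have hdermid : ∀ i, 1 ≤ i → i ≤ k → ∀ x ∈ Icc a b, HasDerivWithinAt (U i (k+1))
      ((1 / dInt a b U (i-1) k) * U (i-1) k x + (-(1 / dInt a b U i k)) * U i k x)
      (Icc a b) x := by
    intro i h1 h2 x hx
    rw [emid i h1 h2]
    have := (hVd (i-1) (by omega) x hx).fun_sub (hVd i h2 x hx)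
    exact this.congr_deriv (by ring)
  have hdertop : ∀ x ∈ Icc a b, HasDerivWithinAt (U (k+1) (k+1))
      ((1 / dInt a b U k k) * U k k x + 0 * U k k x) (Icc a b) x := by
    intro x hx
    rw [etop]
    have := hVd k le_rfl x hx
    convert this using 1
    ring
  -- iterated derivative recursions
  have hsmj : ∀ (j : ℕ), j ≤ k + 1 → ∀ i ≤ k, ContDiffOn ℝ (j:ℕ) (U i k) (Icc a b) := by
    intro j hj i hi
    exact (IH.smooth i hi).of_le (by exact_mod_cast hj)
  have hrec0 : ∀ j, j ≤ k+1 → ∀ x ∈ Icc a b,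
      dW a b (j+1) (U 0 (k+1)) x = (-(1 / dInt a b U 0 k)) * dW a b j (U 0 k) x := by
    intro j hj x hx
    rw [dW_shift hab hder0 j hx,
      dW_comb hab j 0 (-(1 / dInt a b U 0 k)) (hsmj j hj 0 (by omega)) (hsmj j hj 0 (by omega)) hx]
    ring
  have hrecmid : ∀ i, 1 ≤ i → i ≤ k → ∀ j, j ≤ k+1 → ∀ x ∈ Icc a b,
      dW a b (j+1) (U i (k+1)) x = (1 / dInt a b U (i-1) k) * dW a b j (U (i-1) k) x
        + (-(1 / dInt a b U i k)) * dW a b j (U i k) x := by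
    intro i h1 h2 j hj x hx
    rw [dW_shift hab (hdermid i h1 h2) j hx,
      dW_comb hab j (1 / dInt a b U (i-1) k) (-(1 / dInt a b U i k))
        (hsmj j hj (i-1) (by omega)) (hsmj j hj i h2) hx]
  have hrectop : ∀ j, j ≤ k+1 → ∀ x ∈ Icc a b,
      dW a b (j+1) (U (k+1) (k+1)) x = (1 / dInt a b U k k) * dW a b j (U k k) x := by
    intro j hj x hx
    rw [dW_shift hab hdertop j hx,
      dW_comb hab j (1 / dInt a b U k k) 0 (hsmj j hj k le_rfl) (hsmj j hj k le_rfl) hx]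
    ring
  -- smoothness
  have keysm : ∀ (f W : ℝ → ℝ), (∀ x ∈ Icc a b, HasDerivWithinAt f (W x) (Icc a b) x) →
      ContDiffOn ℝ ((k+1:ℕ)) W (Icc a b) → ContDiffOn ℝ ((k+2:ℕ)) f (Icc a b) := by
    intro f W hder hW
    have hcast : ((k+2:ℕ) : WithTop ℕ∞) = ((k+1:ℕ) : WithTop ℕ∞) + 1 := by push_cast; ring
    rw [hcast, contDiffOn_succ_iff_derivWithin (uD hab)]
    refine ⟨fun x hx => (hder x hx).differentiableWithinAt, ?_, ?_⟩
    · intro hω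
      exfalso
      exact (by simp : ((k+1:ℕ) : WithTop ℕ∞) ≠ ⊤) hω
    · apply hW.congr
      intro x hx
      exact (hder x hx).derivWithin ((uD hab).uniqueDiffWithinAt hx)
  have hsm' : ∀ i ≤ k+1, ContDiffOn ℝ ((k+2:ℕ)) (U i (k+1)) (Icc a b) := by
    intro i hi
    rcases Nat.eq_zero_or_pos i with rfl | hpos
    · apply keysm _ _ hder0
      have hA := (hsmj (k+1) le_rfl 0 (by omega)).const_smul (0:ℝ)
      have hB := (hsmj (k+1) le_rfl 0 (by omega)).const_smul (-(1 / dInt a b U 0 k))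
      exact (hA.add hB).congr (fun x hx => by
        simp [Pi.add_apply, Pi.smul_apply, smul_eq_mul])
    · rcases eq_or_lt_of_le hi with rfl | hlt
      · apply keysm _ _ hdertop
        have hA := (hsmj (k+1) le_rfl k le_rfl).const_smul (1 / dInt a b U k k)
        have hB := (hsmj (k+1) le_rfl k le_rfl).const_smul (0:ℝ)
        exact (hA.add hB).congr (fun x hx => by
          simp [Pi.add_apply, Pi.smul_apply, smul_eq_mul])
      · apply keysm _ _ (hdermid i hpos (by omega))
        have hA := (hsmj (k+1) le_rfl (i-1) (by omega)).const_smul (1 / dInt a b U (i-1) k)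
        have hB := (hsmj (k+1) le_rfl i (by omega)).const_smul (-(1 / dInt a b U i k))
        exact (hA.add hB).congr (fun x hx => by
          simp [Pi.add_apply, Pi.smul_apply, smul_eq_mul])
  -- vanishing at a
  have hva' : ∀ i ≤ k+1, ∀ j < i, dW a b j (U i (k+1)) a = 0 := by
    intro i hi j hj
    rcases Nat.eq_zero_or_pos j with rfl | hjpos
    · rw [dW_zero]
      exact hUamid i (by omega) hi
    · obtain ⟨j', rfl⟩ : ∃ j', j = j' + 1 := ⟨j - 1, by omega⟩
      rcases eq_or_lt_of_le hi with rfl | hlt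
      · rw [hrectop j' (by omega) a haI, IH.va k le_rfl j' (by omega)]
        ring
      · rw [hrecmid i (by omega) (by omega) j' (by omega) a haI,
          IH.va (i-1) (by omega) j' (by omega), IH.va i (by omega) j' (by omega)]
        ring
  -- vanishing at b
  have hvb' : ∀ i ≤ k+1, ∀ j, i + j < k+1 → dW a b j (U i (k+1)) b = 0 := by
    intro i hi j hj
    rcases Nat.eq_zero_or_pos j with rfl | hjpos
    · rw [dW_zero]
      exact hUb0 i (by omega)
    · obtain ⟨j', rfl⟩ : ∃ j', j = j' + 1 := ⟨j - 1, by omega⟩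
      rcases Nat.eq_zero_or_pos i with rfl | hipos
      · rw [hrec0 j' (by omega) b hbI, IH.vb 0 (by omega) j' (by omega)]
        ring
      · rw [hrecmid i hipos (by omega) j' (by omega) b hbI,
          IH.vb (i-1) (by omega) j' (by omega), IH.vb i (by omega) j' (by omega)]
        ring
  -- nonvanishing at a
  have hna' : ∀ i < k+1, 0 < dW a b i (U i (k+1)) a := by
    intro i hi
    rcases Nat.eq_zero_or_pos i with rfl | hipos
    · rw [dW_zero, hUa0]; norm_num
    · obtain ⟨i', rfl⟩ : ∃ i', i = i' + 1 := ⟨i - 1, by omega⟩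
      rw [hrecmid (i'+1) (by omega) (by omega) i' (by omega) a haI]
      have h1 := IH.na i' (by omega)
      have h2 := IH.va (i'+1) (by omega) i' (by omega)
      simp only [Nat.add_sub_cancel] at *
      rw [h2]
      have h3 := hd i' (by omega)
      have : (1 / dInt a b U i' k) * dW a b i' (U i' k) a > 0 := by positivity
      linarith
  -- nonvanishing at b
  have hnb' : ∀ i, 1 ≤ i → i ≤ k+1 → 0 < (-1:ℝ)^(k+1-i) * dW a b (k+1-i) (U i (k+1)) b := by
    intro i h1 h2
    rcases eq_or_lt_of_le h2 with rfl | hlt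
    · simp only [Nat.sub_self, pow_zero, one_mul]
      rw [dW_zero, hUbtop]; norm_num
    · have hik : i ≤ k := by omega
      have hidx : k + 1 - i = (k - i) + 1 := by omega
      rw [hidx, hrecmid i h1 hik (k-i) (by omega) b hbI,
        IH.vb (i-1) (by omega) (k-i) (by omega)]
      have h4 := IH.nb i h1 hik
      have h5 := hd i hik
      rw [pow_succ]
      have hexp : (-1:ℝ)^(k-i) * -1 * ((1 / dInt a b U (i-1) k) * 0
          + (-(1 / dInt a b U i k)) * dW a b (k-i) (U i k) b)
          = (1 / dInt a b U i k) * ((-1:ℝ)^(k-i) * dW a b (k-i) (U i k) b) := by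
        ring
      rw [hexp]
      positivity
  -- span property
  have hspan' : ∀ i ≤ k+1, ∃ c₀ c₁ : ℝ, ∀ x ∈ Icc a b,
      dW a b (k+1-1) (U i (k+1)) x = c₀ * U 0 1 x + c₁ * U 1 1 x := by
    have hkidx : k + 1 - 1 = (k - 1) + 1 := by omega
    intro i hi
    rcases Nat.eq_zero_or_pos i with rfl | hipos
    · obtain ⟨c₀, c₁, hc⟩ := IH.spanU 0 (by omega)
      refine ⟨(-(1 / dInt a b U 0 k)) * c₀, (-(1 / dInt a b U 0 k)) * c₁, fun x hx => ?_⟩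
      rw [hkidx, hrec0 (k-1) (by omega) x hx, hc x hx]
      ring
    · rcases eq_or_lt_of_le hi with rfl | hlt
      · obtain ⟨c₀, c₁, hc⟩ := IH.spanU k le_rfl
        refine ⟨(1 / dInt a b U k k) * c₀, (1 / dInt a b U k k) * c₁, fun x hx => ?_⟩
        rw [hkidx, hrectop (k-1) (by omega) x hx, hc x hx]
        ring
      · obtain ⟨c₀, c₁, hc⟩ := IH.spanU (i-1) (by omega)
        obtain ⟨d₀, d₁, hdc⟩ := IH.spanU i (by omega)
        refine ⟨(1 / dInt a b U (i-1) k) * c₀ + (-(1 / dInt a b U i k)) * d₀,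
          (1 / dInt a b U (i-1) k) * c₁ + (-(1 / dInt a b U i k)) * d₁, fun x hx => ?_⟩
        rw [hkidx, hrecmid i hipos (by omega) (k-1) (by omega) x hx, hc x hx, hdc x hx]
        ring
  -- positivity
  have hpos' : ∀ i ≤ k+1, ∀ s ∈ Ioo a b, 0 < U i (k+1) s := by
    intro i hi s hs
    have hsI : s ∈ Icc a b := Ioo_subset_Icc_self hs
    rcases Nat.eq_zero_or_pos i with rfl | hipos
    · -- tail integral is positive
      rw [e0]
      have hint : IntervalIntegrable (fun t => U 0 k t / dInt a b U 0 k) MeasureTheory.volume a b :=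
        (hgden 0 (by omega)).intervalIntegrable_of_Icc hab.le
      have hsub1 : uIcc a s ⊆ uIcc a b := by
        rw [uIcc_of_le hab.le, uIcc_of_le hs.1.le]
        exact Icc_subset_Icc_right hs.2.le
      have hsub2 : uIcc s b ⊆ uIcc a b := by
        rw [uIcc_of_le hab.le, uIcc_of_le hs.2.le]
        exact Icc_subset_Icc_left hs.1.le
      have hsplit : Vfun a b U 0 k b - Vfun a b U 0 k s
          = ∫ t in s..b, U 0 k t / dInt a b U 0 k := by
        unfold Vfun
        rw [intervalIntegral.integral_interval_sub_left hint (hint.mono_set hsub1)]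
      have hpos : 0 < ∫ t in s..b, U 0 k t / dInt a b U 0 k := by
        apply intervalIntegral.intervalIntegral_pos_of_pos_on
        · exact hint.mono_set hsub2
        · intro x hx
          exact div_pos (IH.pos 0 (by omega) x ⟨lt_trans hs.1 hx.1, hx.2⟩) (hd 0 (by omega))
        · exact hs.2
      have := hVb 0 (by omega)
      simp only []
      linarith [hsplit, hpos, this]
    · rcases eq_or_lt_of_le hi with rfl | hlt
      · rw [etop]
        have hint : IntervalIntegrable (fun t => U k k t / dInt a b U k k)
            MeasureTheory.volume a s :=
          ((hgden k le_rfl).mono (Icc_subset_Icc_right hs.2.le)).intervalIntegrable_of_Icc hs.1.le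
        apply intervalIntegral.intervalIntegral_pos_of_pos_on hint
        · intro x hx
          exact div_pos (IH.pos k le_rfl x ⟨hx.1, lt_trans hx.2 hs.2⟩) (hd k le_rfl)
        · exact hs.1
      · exact interior_pos hn hab hu hv hC1 hU.base₀_mem hU.base₁_mem hipos (by omega)
          (hsm' i hi) (hva' i hi) (hna' i (by omega)) (hvb' i hi) (hnb' i hipos hi)
          (hspan' i hi) s hs
  exact ⟨fun i hi => by exact_mod_cast hsm' i hi, hpos', hva', hvb', hna', hnb', hspan'⟩

end Main

/-- Non-vanishing of the critical derivatives of `U_{i,k,n-1}` at the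
endpoints: `U_{i,k,n-1}^(i)(a) ≠ 0` for `i = 0, ..., k-1` and `U_{i,k,n-1}^(k-i)(b) ≠ 0`
for `i = 1, ..., k`; in particular for `B_{i,n-1} := U_{i,n-1,n-1}`:
`B_{i,n-1}^(i)(a) ≠ 0` for `i = 0, ..., n-2` and `B_{i,n-1}^(n-i-1)(b) ≠ 0` for
`i = 1, ..., n-1`. -/
theorem statement4 (n : ℕ) (hn : 3 ≤ n) (a b : ℝ) (hab : a < b) (u v : ℝ → ℝ)
    (hu : ContDiffOn ℝ n u (Set.Icc a b)) (hv : ContDiffOn ℝ n v (Set.Icc a b))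
    (hdim : dimP n u v a b = n) (hC1 : CondC1 n u v a b)
    (U : ℕ → ℕ → ℝ → ℝ) (hU : Recur n u v a b U) :
    (∀ k, 2 ≤ k → k ≤ n - 1 →
      (∀ i < k, dW a b i (U i k) a ≠ 0) ∧
      (∀ i, 1 ≤ i → i ≤ k → dW a b (k - i) (U i k) b ≠ 0)) ∧
    ((∀ i ≤ n - 2, dW a b i (U i (n - 1)) a ≠ 0) ∧
     (∀ i, 1 ≤ i → i ≤ n - 1 → dW a b (n - i - 1) (U i (n - 1)) b ≠ 0)) := by
  have lv : ∀ k, 1 ≤ k → k ≤ n - 1 → Lv a b U k := by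
    intro k
    induction k with
    | zero => intro h; omega
    | succ k IHk =>
      intro h1 h2
      rcases Nat.eq_zero_or_pos k with rfl | hk
      · exact lv_base hn hab hu hv hU
      · exact lv_step hn hab hu hv hC1 hU hk h2 (IHk hk (by omega))
  constructor
  · intro k hk2 hkn
    have L := lv k (by omega) hkn
    constructor
    · exact fun i hik => (L.na i hik).ne'
    · intro i h1 h2
      have hpos := L.nb i h1 h2
      intro hzero
      rw [hzero] at hpos
      simp at hpos
  · have L := lv (n-1) (by omega) le_rfl
    constructor
    · intro i hi
      exact (L.na i (by omega)).ne'
    · intro i h1 h2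
      have hpos := L.nb i h1 h2
      have hidx : n - 1 - i = n - i - 1 := by omega
      rw [hidx] at hpos
      intro hzero
      rw [hzero] at hpos
      simp at hpos
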